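/- arXiv:1807.06914 — 2 statements merged into one kernel-verified Lean document; each statement's English description precedes it below -/
import Mathlib

section
/- If a graph G has a maximum independent set S consisting only of shedding vertices, then G has at least 2^{α(G)} maximum independent sets, and moreover some maximum independent set is disjoint from S. -/
open SimpleGraph

variable {V : Type*} [Fintype V] [DecidableEq V]

/-- A set of vertices is independent: no two of its vertices are adjacent. -/
def isIndep (G : SimpleGraph V) (S : Finset V) : Prop :=
  ∀ ⦃a⦄, a ∈ S → ∀ ⦃b⦄, b ∈ S → ¬ G.Adj a b

/-- The independence number `α(G)`. -/
noncomputable def indepNum (G : SimpleGraph V) : ℕ :=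
  sSup {n | ∃ S : Finset V, isIndep G S ∧ S.card = n}

/-- A maximum independent set: an independent set of size `α(G)`. -/
def isMaxIndep (G : SimpleGraph V) (S : Finset V) : Prop :=
  isIndep G S ∧ S.card = _root_.indepNum G

/-- `G` has two disjoint maximum independent sets. -/
def hasTwoDisjointMaxIndep (G : SimpleGraph V) : Prop :=
  ∃ S₁ S₂ : Finset V, isMaxIndep G S₁ ∧ isMaxIndep G S₂ ∧ Disjoint S₁ S₂

/-- A matching: a set of edges of `G`, pairwise sharing no vertex. -/
def isMatchingF (G : SimpleGraph V) (M : Finset (Sym2 V)) : Prop :=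
  (∀ e ∈ M, e ∈ G.edgeSet) ∧
  (∀ e ∈ M, ∀ f ∈ M, e ≠ f → ∀ v : V, v ∈ e → v ∉ f)

/-- The matching number `μ(G)`. -/
noncomputable def matchNum (G : SimpleGraph V) : ℕ :=
  sSup {n | ∃ M : Finset (Sym2 V), isMatchingF G M ∧ M.card = n}

/-- A shedding vertex: for every independent set `S` of `G − N[v]` there is a
neighbor `u` of `v` with `S ∪ {u}` independent. -/
def IsShedding (G : SimpleGraph V) (v : V) : Prop :=
  ∀ S : Finset V, isIndep G S → (∀ w ∈ S, w ≠ v ∧ ¬ G.Adj v w) →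
    ∃ u, G.Adj v u ∧ isIndep G (insert u S)

/-- A perfect matching of `G`: a matching covering every vertex. -/
def hasPerfectMatchingF (G : SimpleGraph V) : Prop :=
  ∃ M : Finset (Sym2 V), isMatchingF G M ∧ ∀ v : V, ∃ e ∈ M, v ∈ e

/-- The disjoint union of `k` copies of `K₂`. -/
def copiesK2 (k : ℕ) : SimpleGraph (Fin k × Fin 2) :=
  SimpleGraph.fromRel (fun p q => p.1 = q.1)


lemma indep_card_le (G : SimpleGraph V) {T : Finset V} (h : isIndep G T) :
    T.card ≤ _root_.indepNum G := by
  apply le_csSup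
  · refine ⟨Fintype.card V, ?_⟩
    rintro n ⟨U, _, rfl⟩
    exact Finset.card_le_univ U
  · exact ⟨T, h, rfl⟩

lemma key (G : SimpleGraph V) (S : Finset V) (hS : isMaxIndep G S)
    (hshed : ∀ v ∈ S, IsShedding G v) :
    ∀ A : Finset V, A ⊆ S → ∃ T, isMaxIndep G T ∧ S \ A ⊆ T ∧ ∀ a ∈ A, a ∉ T := by
  intro A
  induction A using Finset.induction_on with
  | empty => intro _; exact ⟨S, hS, by simp, by simp⟩
  | @insert v A' hv ih =>
    intro hsub
    have hvS : v ∈ S := hsub (Finset.mem_insert_self v A')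
    have hA'S : A' ⊆ S := fun x hx => hsub (Finset.mem_insert_of_mem hx)
    obtain ⟨T', ⟨hT'i, hT'c⟩, hsub', hdisj'⟩ := ih hA'S
    have hvT' : v ∈ T' := hsub' (Finset.mem_sdiff.2 ⟨hvS, hv⟩)
    have hS''i : isIndep G (T'.erase v) := fun a ha b hb =>
      hT'i (Finset.mem_of_mem_erase ha) (Finset.mem_of_mem_erase hb)
    have hcond : ∀ w ∈ T'.erase v, w ≠ v ∧ ¬ G.Adj v w := fun w hw =>
      ⟨Finset.ne_of_mem_erase hw, hT'i hvT' (Finset.mem_of_mem_erase hw)⟩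
    obtain ⟨u, huv, hui⟩ := hshed v hvS (T'.erase v) hS''i hcond
    have huT' : u ∉ T'.erase v := fun h => hT'i hvT' (Finset.mem_of_mem_erase h) huv
    have huS : u ∉ S := fun h => hS.1 hvS h huv
    have hpos : 1 ≤ T'.card := Finset.card_pos.2 ⟨v, hvT'⟩
    refine ⟨insert u (T'.erase v), ⟨hui, ?_⟩, ?_, ?_⟩
    · rw [Finset.card_insert_of_notMem huT', Finset.card_erase_of_mem hvT']
      omega
    · intro w hw
      rw [Finset.mem_sdiff, Finset.mem_insert] at hw
      push_neg at hw
      exact Finset.mem_insert_of_mem (Finset.mem_erase.2 ⟨hw.2.1,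
        hsub' (Finset.mem_sdiff.2 ⟨hw.1, hw.2.2⟩)⟩)
    · intro a ha hmem
      rcases Finset.mem_insert.1 hmem with h | h
      · rcases Finset.mem_insert.1 ha with rfl | ha'
        · exact G.ne_of_adj huv h
        · exact hS.1 hvS (hA'S ha') (h ▸ huv)
      · rcases Finset.mem_insert.1 ha with rfl | ha'
        · exact Finset.ne_of_mem_erase h rfl
        · exact hdisj' a ha' (Finset.mem_of_mem_erase h)

/-- If some maximum independent set `S` consists only of shedding vertices, then
`|Ω(G)| ≥ 2^{α(G)}` and some maximum independent set is disjoint from `S`. -/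
theorem stmt7 (G : SimpleGraph V) (S : Finset V) (hS : isMaxIndep G S)
    (hshed : ∀ v ∈ S, IsShedding G v) :
    2 ^ _root_.indepNum G ≤ {T : Finset V | isMaxIndep G T}.ncard ∧
      ∃ T : Finset V, isMaxIndep G T ∧ Disjoint S T := by
  have hkey := key G S hS hshed
  have halpha : S.card = _root_.indepNum G := hS.2
  classical
  set f : Finset V → Finset V := fun A =>
    if h : A ⊆ S then (hkey A h).choose else ∅ with hf
  have hfspec : ∀ A, (h : A ⊆ S) →
      isMaxIndep G (f A) ∧ S \ A ⊆ f A ∧ ∀ a ∈ A, a ∉ f A := by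
    intro A h
    simp only [hf, dif_pos h]
    exact (hkey A h).choose_spec
  have hinter : ∀ A, (h : A ⊆ S) → f A ∩ S = S \ A := by
    intro A h
    obtain ⟨_, h2, h3⟩ := hfspec A h
    ext x
    simp only [Finset.mem_inter, Finset.mem_sdiff]
    constructor
    · rintro ⟨hx1, hx2⟩
      exact ⟨hx2, fun hxA => h3 x hxA hx1⟩
    · intro hx
      exact ⟨h2 (Finset.mem_sdiff.2 hx), hx.1⟩
  constructor
  · have hinj : Set.InjOn f ↑S.powerset := by
      intro A hA B hB hAB
      rw [Finset.coe_powerset, Set.mem_preimage, Set.mem_powerset_iff] at hA hB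
      replace hA := Finset.coe_subset.mp hA
      replace hB := Finset.coe_subset.mp hB
      have h1 := hinter A hA
      have h2 := hinter B hB
      rw [hAB, h2] at h1
      have : S \ (S \ A) = S \ (S \ B) := by rw [h1]
      rwa [Finset.sdiff_sdiff_eq_self hA, Finset.sdiff_sdiff_eq_self hB] at this
    have hcard : (S.powerset.image f).card = 2 ^ _root_.indepNum G := by
      rw [Finset.card_image_of_injOn hinj, Finset.card_powerset, halpha]
    calc 2 ^ _root_.indepNum G = ((S.powerset.image f : Finset (Finset V)) : Set (Finset V)).ncard := by
          rw [Set.ncard_coe_finset, hcard]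
      _ ≤ {T : Finset V | isMaxIndep G T}.ncard := by
          apply Set.ncard_le_ncard _ (Set.toFinite _)
          intro T hT
          rw [Finset.coe_image] at hT
          obtain ⟨A, hA, rfl⟩ := hT
          rw [Finset.mem_coe, Finset.mem_powerset] at hA
          exact (hfspec A hA).1
  · obtain ⟨h1, _, h3⟩ := hfspec S (le_refl S)
    exact ⟨f S, h1, Finset.disjoint_left.2 fun a ha => h3 a ha⟩
end

section
/- The corona H ∘ K₁ of a graph H (obtained by attaching a pendant vertex to every vertex of H) has two disjoint maximum independent sets if and only if H is bipartite. -/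
open SimpleGraph

variable {V : Type*} [Fintype V] [DecidableEq V]

/-- The corona `H ∘ K₁`: attach a pendant vertex to each vertex of `H`. -/
def corona (H : SimpleGraph V) : SimpleGraph (V ⊕ V) :=
  SimpleGraph.fromRel (fun a b =>
    match a, b with
    | Sum.inl u, Sum.inl w => H.Adj u w
    | Sum.inl u, Sum.inr w => u = w
    | _, _ => False)


lemma corona_adj_ll (H : SimpleGraph V) {u w : V} :
    (corona H).Adj (Sum.inl u) (Sum.inl w) ↔ H.Adj u w := by
  simp only [corona, SimpleGraph.fromRel_adj]
  constructor
  · rintro ⟨-, h1 | h1⟩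
    · exact h1
    · exact h1.symm
  · intro h; exact ⟨by simpa using h.ne, Or.inl h⟩

lemma corona_adj_lr (H : SimpleGraph V) {u w : V} :
    (corona H).Adj (Sum.inl u) (Sum.inr w) ↔ u = w := by
  simp only [corona, SimpleGraph.fromRel_adj]
  constructor
  · rintro ⟨-, h1 | h1⟩
    · exact h1
    · exact h1.elim
  · rintro rfl; exact ⟨by simp, Or.inl rfl⟩

lemma corona_not_adj_rr (H : SimpleGraph V) {u w : V} :
    ¬ (corona H).Adj (Sum.inr u) (Sum.inr w) := by
  simp only [corona, SimpleGraph.fromRel_adj]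
  rintro ⟨-, h | h⟩ <;> exact h

lemma indep_injOn (H : SimpleGraph V) {S : Finset (V ⊕ V)}
    (hS : isIndep (corona H) S) :
    Set.InjOn (Sum.elim (id : V → V) id) S := by
  rintro a ha b hb hab
  rcases a with u | u <;> rcases b with w | w <;>
    simp only [Sum.elim_inl, Sum.elim_inr, id] at hab <;> subst hab
  · rfl
  · exact absurd ((corona_adj_lr H).mpr rfl) (hS ha hb)
  · exact absurd ((corona_adj_lr H).mpr rfl) (hS hb ha)
  · rfl

lemma indep_card_le_s13 (H : SimpleGraph V) {S : Finset (V ⊕ V)}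
    (hS : isIndep (corona H) S) : S.card ≤ Fintype.card V := by
  calc S.card = (S.image (Sum.elim id id)).card :=
        (Finset.card_image_of_injOn (indep_injOn H hS)).symm
    _ ≤ Fintype.card V := Finset.card_le_univ _

lemma indepNum_corona (H : SimpleGraph V) :
    _root_.indepNum (corona H) = Fintype.card V := by
  apply le_antisymm
  · have hne : {n | ∃ S : Finset (V ⊕ V), isIndep (corona H) S ∧ S.card = n}.Nonempty :=
      ⟨0, ∅, fun a ha => absurd ha (Finset.notMem_empty a), rfl⟩
    apply csSup_le hne
    rintro n ⟨S, hS, rfl⟩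
    exact indep_card_le_s13 H hS
  · apply le_csSup
    · exact ⟨Fintype.card V, by rintro n ⟨S, hS, rfl⟩; exact indep_card_le_s13 H hS⟩
    · refine ⟨Finset.univ.image Sum.inr, ?_, ?_⟩
      · rintro a ha b hb hadj
        simp only [Finset.mem_image] at ha hb
        obtain ⟨u, -, rfl⟩ := ha; obtain ⟨w, -, rfl⟩ := hb
        exact corona_not_adj_rr H hadj
      · rw [Finset.card_image_of_injective _ Sum.inr_injective, Finset.card_univ]

lemma maxIndep_cover (H : SimpleGraph V) {S : Finset (V ⊕ V)}
    (hS : isMaxIndep (corona H) S) (u : V) :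
    Sum.inl u ∈ S ∨ Sum.inr u ∈ S := by
  have himg : S.image (Sum.elim id id) = Finset.univ := by
    apply Finset.eq_univ_of_card
    rw [Finset.card_image_of_injOn (indep_injOn H hS.1), hS.2, indepNum_corona]
  have hu : u ∈ S.image (Sum.elim id id) := himg ▸ Finset.mem_univ u
  simp only [Finset.mem_image] at hu
  obtain ⟨a, ha, hau⟩ := hu
  rcases a with w | w <;> simp only [Sum.elim_inl, Sum.elim_inr, id] at hau <;> subst hau
  · exact Or.inl ha
  · exact Or.inr ha

lemma maxIndep_of_indep (H : SimpleGraph V) {A : Finset V} (hA : isIndep H A) :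
    isMaxIndep (corona H) (A.image Sum.inl ∪ Aᶜ.image Sum.inr) := by
  constructor
  · rintro a ha b hb hadj
    simp only [Finset.mem_union, Finset.mem_image] at ha hb
    rcases ha with ⟨u, hu, rfl⟩ | ⟨u, hu, rfl⟩ <;>
      rcases hb with ⟨w, hw, rfl⟩ | ⟨w, hw, rfl⟩
    · exact hA hu hw ((corona_adj_ll H).mp hadj)
    · have h := (corona_adj_lr H).mp hadj; subst h
      exact (Finset.mem_compl.mp hw) hu
    · have h := (corona_adj_lr H).mp hadj.symm; subst h
      exact (Finset.mem_compl.mp hu) hw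
    · exact corona_not_adj_rr H hadj
  · rw [Finset.card_union_of_disjoint, Finset.card_image_of_injective _ Sum.inl_injective,
      Finset.card_image_of_injective _ Sum.inr_injective, indepNum_corona,
      Finset.card_add_card_compl]
    rw [Finset.disjoint_left]
    rintro x hx hx'
    simp only [Finset.mem_image] at hx hx'
    obtain ⟨u, -, rfl⟩ := hx
    obtain ⟨w, -, h⟩ := hx'
    exact Sum.inr_ne_inl h

/-- `H ∘ K₁` has two disjoint maximum independent sets iff `H` is bipartite. -/
theorem stmt13 (H : SimpleGraph V) :
    hasTwoDisjointMaxIndep (corona H) ↔ H.Colorable 2 := by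
  constructor
  · rintro ⟨S₁, S₂, h₁, h₂, hd⟩
    refine ⟨SimpleGraph.Coloring.mk (fun u => if Sum.inl u ∈ S₁ then 0 else 1) ?_⟩
    intro u w huw
    by_cases hu : Sum.inl u ∈ S₁ <;> by_cases hw : Sum.inl w ∈ S₁
    · exact absurd ((corona_adj_ll H).mpr huw) (h₁.1 hu hw)
    · simp [hu, hw]
    · simp [hu, hw]
    · exfalso
      have hru : Sum.inr u ∈ S₁ := (maxIndep_cover H h₁ u).resolve_left hu
      have hrw : Sum.inr w ∈ S₁ := (maxIndep_cover H h₁ w).resolve_left hw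
      have hlu : Sum.inl u ∈ S₂ := (maxIndep_cover H h₂ u).resolve_right
        (fun h => (Finset.disjoint_left.mp hd hru) h)
      have hlw : Sum.inl w ∈ S₂ := (maxIndep_cover H h₂ w).resolve_right
        (fun h => (Finset.disjoint_left.mp hd hrw) h)
      exact h₂.1 hlu hlw ((corona_adj_ll H).mpr huw)
  · rintro ⟨c⟩
    set A : Finset V := Finset.univ.filter (fun u => c u = 0) with hAdef
    have hone : ∀ x : Fin 2, x ≠ 0 → x = 1 := by decide
    have hAI : isIndep H A := by
      intro a ha b hb hab
      simp only [hAdef, Finset.mem_filter] at ha hb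
      exact c.valid hab (ha.2.trans hb.2.symm)
    have hACI : isIndep H Aᶜ := by
      intro a ha b hb hab
      simp only [hAdef, Finset.mem_compl, Finset.mem_filter, Finset.mem_univ,
        true_and] at ha hb
      exact c.valid hab ((hone _ ha).trans (hone _ hb).symm)
    refine ⟨A.image Sum.inl ∪ Aᶜ.image Sum.inr,
      Aᶜ.image Sum.inl ∪ Aᶜᶜ.image Sum.inr,
      maxIndep_of_indep H hAI, maxIndep_of_indep H hACI, ?_⟩
    rw [compl_compl, Finset.disjoint_left]
    rintro x hx hx'
    simp only [Finset.mem_union, Finset.mem_image, Finset.mem_compl] at hx hx'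
    rcases hx with ⟨u, hu, rfl⟩ | ⟨u, hu, rfl⟩ <;>
      rcases hx' with ⟨w, hw, h⟩ | ⟨w, hw, h⟩
    · cases Sum.inl_injective h; exact hw hu
    · exact Sum.inr_ne_inl h
    · exact Sum.inr_ne_inl h.symm
    · cases Sum.inr_injective h; exact hu hw
end
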